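/- Let B : ℤ×ℤ → 𝔻 be such that s_n^B(l₀) = 0 for all n ∈ ℤ and some l₀ ∈ {1,2,…}. Then |B(n,k)| = 1 for all n, k ∈ ℤ with n ≠ k, and consequently s_n^B(l) = 0 for all n ∈ ℤ and all l ≥ 0. -/

import Mathlib

open Real

lemma hasSum_aux (n : ℤ) :
    HasSum (fun k : ℤ => if k = n then (0:ℝ) else 1 / ((k : ℝ) - n) ^ 2) (π ^ 2 / 3) := by
  have h0 : HasSum (fun j : ℤ => if j = 0 then (0:ℝ) else 1 / (j : ℝ) ^ 2) (π ^ 2 / 3) := by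
    have hpos : HasSum (fun m : ℕ => if (m : ℤ) = 0 then (0:ℝ) else 1 / ((m : ℤ) : ℝ) ^ 2)
        (π ^ 2 / 6) := by
      have := hasSum_zeta_two
      convert this using 2 with m
      rcases Nat.eq_zero_or_pos m with rfl | hm
      · simp
      · simp [Int.natCast_ne_zero.mpr hm.ne', hm.ne']
    have hneg : HasSum (fun m : ℕ => if (-(m + 1) : ℤ) = 0 then (0:ℝ)
        else 1 / ((-(m + 1) : ℤ) : ℝ) ^ 2) (π ^ 2 / 6) := by
      have h1 : HasSum (fun m : ℕ => (1:ℝ) / ((m : ℝ) + 1) ^ 2) (π ^ 2 / 6) := by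
        have := (hasSum_nat_add_iff' (f := fun n : ℕ => (1:ℝ) / (n : ℝ) ^ 2)
          (g := π ^ 2 / 6) 1).mpr hasSum_zeta_two
        simpa using this
      have heq : (fun m : ℕ => if (-(m + 1) : ℤ) = 0 then (0:ℝ)
          else 1 / ((-(m + 1) : ℤ) : ℝ) ^ 2) = fun m : ℕ => (1:ℝ) / ((m : ℝ) + 1) ^ 2 := by
        funext m
        have hne : (-(m + 1) : ℤ) ≠ 0 := by omega
        rw [if_neg hne]
        push_cast
        ring_nf
      rw [heq]
      exact h1
    have := HasSum.of_nat_of_neg_add_one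
      (f := fun j : ℤ => if j = 0 then (0:ℝ) else 1 / (j : ℝ) ^ 2) hpos hneg
    norm_num at this ⊢
    convert this using 1
    ring
  have := ((Equiv.subRight n).hasSum_iff
    (f := fun j : ℤ => if j = 0 then (0:ℝ) else 1 / (j : ℝ) ^ 2)).mpr h0
  convert this using 1
  funext k
  simp only [Function.comp, Equiv.subRight_apply]
  by_cases hk : k = n
  · simp [hk, sub_eq_zero]
  · have : k - n ≠ 0 := sub_ne_zero.mpr hk
    simp only [hk, this, if_false]
    push_cast
    ring_nf

/-- The noise number `s_n^B(l)` of a matrix `B : ℤ×ℤ → 𝔻`. -/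
noncomputable def sZ (B : ℤ → ℤ → ℂ) (n : ℤ) (l : ℕ) : ℝ :=
  (π / Real.sqrt 3) ^ l *
    (1 - 3 / π ^ 2 *
      ∑' k : ℤ, (if k = n then (0:ℝ) else ‖B n k‖ ^ l / ((k : ℝ) - n) ^ 2))

/-- If `B : ℤ×ℤ → 𝔻` satisfies `s_n^B(l₀) = 0` for all `n` and some `l₀ ≥ 1`, then
`|B(n,k)| = 1` for all `n ≠ k`, and `s_n^B(l) = 0` for all `n` and all `l ≥ 0`. -/
theorem stmt10 (B : ℤ → ℤ → ℂ) (hB : ∀ n k, ‖B n k‖ ≤ 1)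
    (l₀ : ℕ) (hl₀ : 1 ≤ l₀) (h : ∀ n : ℤ, sZ B n l₀ = 0) :
    (∀ n k : ℤ, n ≠ k → ‖B n k‖ = 1) ∧
    (∀ (n : ℤ) (l : ℕ), sZ B n l = 0) := by
  have hπ : (π : ℝ) ≠ 0 := Real.pi_ne_zero
  have hbase : (π / Real.sqrt 3) ≠ 0 := by
    apply div_ne_zero hπ
    positivity
  -- denominators
  have hden : ∀ n k : ℤ, k ≠ n → (0:ℝ) < ((k : ℝ) - n) ^ 2 := by
    intro n k hk
    have : ((k : ℝ) - n) ≠ 0 := by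
      rw [sub_ne_zero]
      exact_mod_cast hk
    positivity
  -- pointwise bound for any l
  have hle : ∀ (n : ℤ) (l : ℕ) (k : ℤ),
      (if k = n then (0:ℝ) else ‖B n k‖ ^ l / ((k : ℝ) - n) ^ 2) ≤
      (if k = n then (0:ℝ) else 1 / ((k : ℝ) - n) ^ 2) := by
    intro n l k
    by_cases hk : k = n
    · simp [hk]
    · simp only [hk, if_false]
      gcongr
      exact pow_le_one₀ (norm_nonneg _) (hB n k)
  have hnonneg : ∀ (n : ℤ) (l : ℕ) (k : ℤ),
      (0:ℝ) ≤ (if k = n then (0:ℝ) else ‖B n k‖ ^ l / ((k : ℝ) - n) ^ 2) := by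
    intro n l k
    by_cases hk : k = n <;> simp [hk] <;> positivity
  have hsumm : ∀ (n : ℤ) (l : ℕ),
      Summable (fun k : ℤ => if k = n then (0:ℝ)
        else ‖B n k‖ ^ l / ((k : ℝ) - n) ^ 2) := by
    intro n l
    exact Summable.of_nonneg_of_le (hnonneg n l) (hle n l) (hasSum_aux n).summable
  -- key: abs = 1 off-diagonal
  have key : ∀ n k : ℤ, n ≠ k → ‖B n k‖ = 1 := by
    intro n k hnk
    have hk : k ≠ n := hnk.symm
    by_contra hne
    have hlt : ‖B n k‖ < 1 := lt_of_le_of_ne (hB n k) hne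
    -- from h n : tsum = π²/3
    have hts : (∑' k : ℤ, (if k = n then (0:ℝ)
        else ‖B n k‖ ^ l₀ / ((k : ℝ) - n) ^ 2)) = π ^ 2 / 3 := by
      have h0 := h n
      unfold sZ at h0
      rcases mul_eq_zero.mp h0 with h1 | h2
      · exact absurd h1 (pow_ne_zero _ hbase)
      · have : 3 / π ^ 2 * (∑' k : ℤ, (if k = n then (0:ℝ)
            else ‖B n k‖ ^ l₀ / ((k : ℝ) - n) ^ 2)) = 1 := by linarith
        field_simp at this
        linarith
    have hstrict : (if k = n then (0:ℝ)
        else ‖B n k‖ ^ l₀ / ((k : ℝ) - n) ^ 2) <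
        (if k = n then (0:ℝ) else 1 / ((k : ℝ) - n) ^ 2) := by
      simp only [hk, if_false]
      have h1 : ‖B n k‖ ^ l₀ < 1 :=
        pow_lt_one₀ (norm_nonneg _) hlt (by omega)
      exact div_lt_div_of_pos_right h1 (hden n k hk) |>.trans_le le_rfl
    have := Summable.tsum_lt_tsum (hle n l₀) hstrict (hsumm n l₀) (hasSum_aux n).summable
    rw [hts, (hasSum_aux n).tsum_eq] at this
    exact lt_irrefl _ this
  refine ⟨key, ?_⟩
  intro n l
  have heq : (fun k : ℤ => if k = n then (0:ℝ)
      else ‖B n k‖ ^ l / ((k : ℝ) - n) ^ 2) =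
      fun k : ℤ => if k = n then (0:ℝ) else 1 / ((k : ℝ) - n) ^ 2 := by
    funext k
    by_cases hk : k = n
    · simp [hk]
    · simp only [hk, if_false]
      rw [key n k (Ne.symm hk), one_pow]
  unfold sZ
  rw [heq, (hasSum_aux n).tsum_eq]
  have : 3 / π ^ 2 * (π ^ 2 / 3) = 1 := by field_simp
  rw [this]
  ring
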